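/- For every integer j ≥ 0, every integer m ≥ 0, every integer K > 0, and all real numbers a and b, the function f(x) := (x^j / K^j) · exp(2πi a x + 2πi b x²) satisfies max_{0 ≤ x ≤ K} | f^{(m)}(x) | ≤ ( 2π(|a| + |2bK|) + (m+j)/K )^m, where f^{(m)} denotes the m-th derivative of f with respect to x. -/

import Mathlib

open Polynomial Complex in
/-- The polynomials `P_m` with `f^{(m)} = P_m(x) e^{2πi(ax+bx²)}`. -/
noncomputable def TKP (j K : ℕ) (a b : ℝ) : ℕ → ℂ[X]
  | 0 => C (((K : ℂ) ^ j)⁻¹) * X ^ j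
  | (m+1) => derivative (TKP j K a b m) +
      (C (2 * (Real.pi : ℂ) * I * a) + C (2 * (Real.pi : ℂ) * I * (2*b)) * X) * TKP j K a b m

section Aux
open Polynomial Complex

lemma tk_iter_add (k : ℕ) (p q : ℂ[X]) :
    derivative^[k] (p + q) = derivative^[k] p + derivative^[k] q := by
  induction k generalizing p q with
  | zero => simp
  | succ k ih => simp [Function.iterate_succ_apply', ih, derivative_add]

lemma tk_iter_lin_mul (u v : ℂ) (r : ℕ) (q : ℂ[X]) :
    derivative^[r+1] ((C u + C v * X) * q)
      = (C u + C v * X) * derivative^[r+1] q + C (((r:ℂ)+1) * v) * derivative^[r] q := by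
  induction r generalizing q with
  | zero =>
    simp only [zero_add, Function.iterate_one, Function.iterate_zero, id_eq]
    rw [derivative_mul]
    simp only [derivative_add, derivative_C, derivative_C_mul, derivative_X, mul_one, zero_add,
      Nat.cast_zero]
    ring
  | succ r ih =>
    rw [Function.iterate_succ_apply, derivative_mul]
    have hd : derivative (C u + C v * X) = C v := by
      simp [derivative_add, derivative_C_mul]
    rw [hd, tk_iter_add, iterate_derivative_C_mul, ih (derivative q)]
    have h1 : ∀ p : ℂ[X], derivative^[r+1] (derivative p) = derivative^[r+1+1] p := by
      intro p; exact (Function.iterate_succ_apply _ _ _).symm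
    have h2 : ∀ p : ℂ[X], derivative^[r] (derivative p) = derivative^[r+1] p := by
      intro p; exact (Function.iterate_succ_apply _ _ _).symm
    rw [h1, h2]
    push_cast
    simp only [C_add, C_mul, C_1]
    ring

lemma tk_arith (A K N : ℝ) (hA : 0 ≤ A) (hK : 0 < K) (hN : 1 ≤ N) (m s : ℕ) :
    (N/K)^(s+2) * (A+N/K)^m + A*(N/K)^(s+1)*(A+N/K)^m
        + ((s:ℝ)+1)*(A/K)*(N/K)^s*(A+N/K)^m
      ≤ ((N+1)/K)^(s+1) * (A+(N+1)/K)^(m+1) := by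
  have hN0 : 0 < N := lt_of_lt_of_le one_pos hN
  have hB : 0 ≤ A + N/K := by positivity
  have hBB : A + N/K ≤ A + (N+1)/K := by
    have : N/K ≤ (N+1)/K := by gcongr; linarith
    linarith
  have e3 : (A+N/K)^(m+1) ≤ (A+(N+1)/K)^(m+1) := pow_le_pow_left₀ hB hBB _
  have e4 : A*(A+N/K)^m ≤ (A+(N+1)/K)^(m+1) := by
    calc A*(A+N/K)^m ≤ (A+N/K)*(A+N/K)^m := by
          apply mul_le_mul_of_nonneg_right _ (by positivity)
          have : 0 ≤ N/K := by positivity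
          linarith
      _ = (A+N/K)^(m+1) := by ring
      _ ≤ _ := e3
  have e1 : ((N+1)/K)^(s+1) = (N/K)^(s+1) * (1+1/N)^(s+1) := by
    rw [← mul_pow]
    congr 1
    field_simp
  have e2 : (1 : ℝ) + ((s:ℝ)+1)*(1/N) ≤ (1+1/N)^(s+1) := by
    have hpos : (0:ℝ) ≤ 1/N := by positivity
    have h := one_add_mul_le_pow (a := 1/N) (by linarith) (s+1)
    push_cast at h
    linarith
  have hfirst : (N/K)^(s+2) * (A+N/K)^m + A*(N/K)^(s+1)*(A+N/K)^m
        + ((s:ℝ)+1)*(A/K)*(N/K)^s*(A+N/K)^m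
      = (N/K)^(s+1)*(A+N/K)^(m+1) + (N/K)^(s+1)*(((s:ℝ)+1)/N)*(A*(A+N/K)^m) := by
    have hNN : N * N⁻¹ = 1 := mul_inv_cancel₀ hN0.ne'
    simp only [div_eq_mul_inv]
    linear_combination (-((s:ℝ)+1)*A*K⁻¹*(N*K⁻¹)^s*(A+N*K⁻¹)^m) * hNN
  rw [hfirst]
  calc (N/K)^(s+1)*(A+N/K)^(m+1) + (N/K)^(s+1)*(((s:ℝ)+1)/N)*(A*(A+N/K)^m)
      ≤ (N/K)^(s+1)*(A+(N+1)/K)^(m+1) + (N/K)^(s+1)*(((s:ℝ)+1)/N)*(A+(N+1)/K)^(m+1) := by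
        apply add_le_add
        · exact mul_le_mul_of_nonneg_left e3 (by positivity)
        · exact mul_le_mul_of_nonneg_left e4 (by positivity)
    _ = (N/K)^(s+1) * (1 + ((s:ℝ)+1)*(1/N)) * (A+(N+1)/K)^(m+1) := by ring
    _ ≤ (N/K)^(s+1) * (1+1/N)^(s+1) * (A+(N+1)/K)^(m+1) := by
        apply mul_le_mul_of_nonneg_right _ (by positivity)
        exact mul_le_mul_of_nonneg_left e2 (by positivity)
    _ = ((N+1)/K)^(s+1) * (A+(N+1)/K)^(m+1) := by rw [e1]

lemma tk_rep (j K : ℕ) (a b : ℝ) (m : ℕ) :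
    iteratedDeriv m
        (fun x : ℝ => (x : ℂ) ^ j / (K : ℂ) ^ j *
          Complex.exp (2 * (Real.pi : ℂ) * Complex.I * (a : ℂ) * (x : ℂ) +
            2 * (Real.pi : ℂ) * Complex.I * (b : ℂ) * (x : ℂ) ^ 2))
      = fun x : ℝ => (TKP j K a b m).eval (x : ℂ) *
          Complex.exp (2 * (Real.pi : ℂ) * Complex.I * (a : ℂ) * (x : ℂ) +
            2 * (Real.pi : ℂ) * Complex.I * (b : ℂ) * (x : ℂ) ^ 2) := by
  induction m with
  | zero =>
    funext x
    rw [iteratedDeriv_zero]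
    rw [show TKP j K a b 0 = C (((K : ℂ) ^ j)⁻¹) * X ^ j from rfl]
    simp only [eval_mul, eval_C, eval_pow, eval_X]
    rw [div_eq_mul_inv]
    ring
  | succ m ih =>
    rw [iteratedDeriv_succ, ih]
    funext x
    have hp : HasDerivAt (fun y : ℝ => (TKP j K a b m).eval (y : ℂ))
        ((derivative (TKP j K a b m)).eval (x : ℂ)) x :=
      (Polynomial.hasDerivAt _ _).comp_ofReal
    have hg : HasDerivAt (fun y : ℝ =>
          2 * (Real.pi : ℂ) * Complex.I * (a : ℂ) * (y : ℂ) +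
            2 * (Real.pi : ℂ) * Complex.I * (b : ℂ) * (y : ℂ) ^ 2)
        (2 * (Real.pi : ℂ) * Complex.I * (a : ℂ) +
          2 * (Real.pi : ℂ) * Complex.I * (b : ℂ) * (2 * (x : ℂ))) x := by
      have h1 : HasDerivAt (fun z : ℂ =>
            2 * (Real.pi : ℂ) * Complex.I * (a : ℂ) * z +
              2 * (Real.pi : ℂ) * Complex.I * (b : ℂ) * z ^ 2)
          (2 * (Real.pi : ℂ) * Complex.I * (a : ℂ) +
            2 * (Real.pi : ℂ) * Complex.I * (b : ℂ) * (2 * (x : ℂ))) (x : ℂ) := by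
        have ha := (hasDerivAt_id ((x : ℝ) : ℂ)).const_mul (2 * (Real.pi : ℂ) * Complex.I * (a : ℂ))
        have hb := (hasDerivAt_pow 2 ((x : ℝ) : ℂ)).const_mul (2 * (Real.pi : ℂ) * Complex.I * (b : ℂ))
        have hab := ha.add hb
        exact hab.congr_deriv (by norm_num)
      exact h1.comp_ofReal
    have he := hg.cexp
    have hprod := hp.mul he
    erw [hprod.deriv]
    rw [show TKP j K a b (m+1) = derivative (TKP j K a b m) +
      (C (2 * (Real.pi : ℂ) * I * a) + C (2 * (Real.pi : ℂ) * I * (2*b)) * X) * TKP j K a b m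
      from rfl]
    simp only [eval_add, eval_mul, eval_C, eval_X]
    ring

/-- the exponential has norm 1 -/
lemma tk_exp_norm (a b x : ℝ) :
    ‖Complex.exp (2 * (Real.pi : ℂ) * Complex.I * (a : ℂ) * (x : ℂ) +
        2 * (Real.pi : ℂ) * Complex.I * (b : ℂ) * (x : ℂ) ^ 2)‖ = 1 := by
  have h : 2 * (Real.pi : ℂ) * Complex.I * (a : ℂ) * (x : ℂ) +
      2 * (Real.pi : ℂ) * Complex.I * (b : ℂ) * (x : ℂ) ^ 2
      = ((2 * Real.pi * a * x + 2 * Real.pi * b * x ^ 2 : ℝ) : ℂ) * Complex.I := by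
    push_cast; ring
  rw [h]
  exact Complex.norm_exp_ofReal_mul_I _

lemma tk_bound (j K : ℕ) (hK : 0 < K) (a b : ℝ) (m : ℕ) :
    ∀ (r : ℕ) (x : ℝ), x ∈ Set.Icc (0:ℝ) (K:ℝ) →
      ‖(derivative^[r] (TKP j K a b m)).eval (x:ℂ)‖
        ≤ (((m:ℝ)+(j:ℝ))/(K:ℝ))^r *
          (2*Real.pi*(|a|+|2*b*(K:ℝ)|) + ((m:ℝ)+(j:ℝ))/(K:ℝ))^m := by
  have hKR : (0:ℝ) < (K:ℝ) := by exact_mod_cast hK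
  set A : ℝ := 2*Real.pi*(|a|+|2*b*(K:ℝ)|) with hA_def
  have hA0 : 0 ≤ A := by positivity
  have hbK : |2*b*(K:ℝ)| = |2*b| * (K:ℝ) := by
    rw [show 2*b*(K:ℝ) = (2*b)*(K:ℝ) by ring, abs_mul, _root_.abs_of_nonneg hKR.le]
  -- bound on the linear polynomial
  have hLp : ∀ x : ℝ, x ∈ Set.Icc (0:ℝ) (K:ℝ) →
      ‖(2 * (Real.pi : ℂ) * I * a + 2 * (Real.pi : ℂ) * I * (2*b) * (x:ℂ))‖ ≤ A := by
    intro x hx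
    have hval : (2 * (Real.pi : ℂ) * I * a + 2 * (Real.pi : ℂ) * I * (2*b) * (x:ℂ))
        = ((2*Real.pi*(a + 2*b*x) : ℝ) : ℂ) * I := by push_cast; ring
    rw [hval, norm_mul, Complex.norm_I, mul_one, Complex.norm_real, Real.norm_eq_abs]
    rw [abs_mul, _root_.abs_of_nonneg (by positivity : (0:ℝ) ≤ 2*Real.pi), hA_def]
    have habs : |a + 2*b*x| ≤ |a| + |2*b*(K:ℝ)| := by
      refine (abs_add_le _ _).trans ?_
      have h1 : |2*b*x| = |2*b| *|x| := by
        rw [show 2*b*x = (2*b)*x by ring, abs_mul]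
      have h3 : |x| ≤ (K:ℝ) := by
        rw [_root_.abs_of_nonneg hx.1]; exact hx.2
      have : |2*b*x| ≤ |2*b*(K:ℝ)| := by
        rw [h1, hbK]
        exact mul_le_mul_of_nonneg_left h3 (abs_nonneg _)
      linarith
    exact mul_le_mul_of_nonneg_left habs (by positivity)
  have hc0 : ‖(2 * (Real.pi : ℂ) * I * (2*b) : ℂ)‖ ≤ A / K := by
    have hval : (2 * (Real.pi : ℂ) * I * (2*b) : ℂ)
        = ((2*Real.pi*(2*b) : ℝ) : ℂ) * I := by push_cast; ring
    rw [hval, norm_mul, Complex.norm_I, mul_one, Complex.norm_real, Real.norm_eq_abs]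
    rw [le_div_iff₀ hKR, abs_mul, _root_.abs_of_nonneg (by positivity : (0:ℝ) ≤ 2*Real.pi),
      hA_def]
    nlinarith [abs_nonneg a, Real.pi_pos, hbK, abs_nonneg (2*b)]
  induction m with
  | zero =>
    intro r x hx
    rw [show TKP j K a b 0 = C (((K : ℂ) ^ j)⁻¹) * X ^ j from rfl,
      iterate_derivative_C_mul, iterate_derivative_X_pow_eq_C_mul]
    simp only [eval_mul, eval_C, eval_pow, eval_X, norm_mul, norm_pow, norm_inv]
    rw [Complex.norm_natCast, Complex.norm_natCast]
    have hxnorm : ‖(x:ℂ)‖ = x := by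
      rw [Complex.norm_real, Real.norm_eq_abs, _root_.abs_of_nonneg hx.1]
    rw [hxnorm]
    simp only [Nat.cast_zero, zero_add, pow_zero, mul_one]
    by_cases hr : r ≤ j
    · calc ((K:ℝ)^j)⁻¹ * ((Nat.descFactorial j r : ℝ) * x^(j-r))
          ≤ ((K:ℝ)^j)⁻¹ * ((j:ℝ)^r * (K:ℝ)^(j-r)) := by
            apply mul_le_mul_of_nonneg_left _ (by positivity)
            apply mul_le_mul
            · exact_mod_cast Nat.descFactorial_le_pow j r
            · exact pow_le_pow_left₀ hx.1 hx.2 _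
            · exact pow_nonneg hx.1 _
            · positivity
        _ = ((j:ℝ)/(K:ℝ))^r := by
            rw [pow_sub₀ _ (ne_of_gt hKR) hr, div_pow]
            field_simp
    · have hd : Nat.descFactorial j r = 0 :=
        Nat.descFactorial_eq_zero_iff_lt.mpr (by omega)
      rw [hd]
      simp only [Nat.cast_zero, mul_zero, zero_mul]
      positivity
  | succ m ih =>
    intro r x hx
    set N : ℝ := (m:ℝ)+(j:ℝ) with hN_def
    have hN0 : 0 ≤ N := by positivity
    have hgoalcast : ((((m+1:ℕ)):ℝ)+(j:ℝ)) = N + 1 := by push_cast [hN_def]; ring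
    rw [hgoalcast]
    match r with
    | 0 =>
      simp only [Function.iterate_zero, id_eq, pow_zero, one_mul]
      rw [show TKP j K a b (m+1) = derivative (TKP j K a b m) +
        (C (2 * (Real.pi : ℂ) * I * a) + C (2 * (Real.pi : ℂ) * I * (2*b)) * X)
          * TKP j K a b m from rfl]
      simp only [eval_add, eval_mul, eval_C, eval_X]
      refine (norm_add_le _ _).trans ?_
      rw [norm_mul]
      have h1 : ‖(derivative (TKP j K a b m)).eval (x:ℂ)‖ ≤ (N/K)^1 * (A + N/K)^m := by
        have := ih 1 x hx
        simpa using this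
      have h2 : ‖(TKP j K a b m).eval (x:ℂ)‖ ≤ (A + N/K)^m := by
        have := ih 0 x hx
        simpa using this
      have h3 : ‖(2 * (Real.pi : ℂ) * I * a + 2 * (Real.pi : ℂ) * I * (2*b) * (x:ℂ))‖
            * ‖(TKP j K a b m).eval (x:ℂ)‖ ≤ A * (A + N/K)^m :=
        mul_le_mul (hLp x hx) h2 (norm_nonneg _) hA0
      have hBB : (A + N/K)^(m+1) ≤ (A + (N+1)/K)^(m+1) := by
        apply pow_le_pow_left₀ (by positivity)
        have hd : N/K ≤ (N+1)/K := by gcongr <;> linarith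
        linarith
      calc _ ≤ (N/K)^1 * (A + N/K)^m + A * (A + N/K)^m := add_le_add h1 h3
        _ = (A + N/K)^(m+1) := by ring
        _ ≤ (A + (N+1)/K)^(m+1) := hBB
    | (s+1) =>
      have hsplit : derivative^[s+1] (TKP j K a b (m+1))
          = derivative^[s+1+1] (TKP j K a b m)
            + ((C (2 * (Real.pi : ℂ) * I * a) + C (2 * (Real.pi : ℂ) * I * (2*b)) * X)
                * derivative^[s+1] (TKP j K a b m)
              + C (((s:ℂ)+1) * (2 * (Real.pi : ℂ) * I * (2*b))) * derivative^[s] (TKP j K a b m)) := by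
        rw [show TKP j K a b (m+1) = derivative (TKP j K a b m) +
          (C (2 * (Real.pi : ℂ) * I * a) + C (2 * (Real.pi : ℂ) * I * (2*b)) * X)
            * TKP j K a b m from rfl]
        rw [tk_iter_add, tk_iter_lin_mul]
        rfl
      rw [hsplit]
      simp only [eval_add, eval_mul, eval_C, eval_X]
      refine (norm_add_le _ _).trans ?_
      refine le_trans (add_le_add_right (norm_add_le _ _) _) ?_
      rw [norm_mul, norm_mul]
      have h1 : ‖(derivative^[s+1+1] (TKP j K a b m)).eval (x:ℂ)‖
          ≤ (N/K)^(s+2) * (A + N/K)^m := by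
        have := ih (s+2) x hx; simpa using this
      have h2 : ‖(2 * (Real.pi : ℂ) * I * a + 2 * (Real.pi : ℂ) * I * (2*b) * (x:ℂ))‖
            * ‖(derivative^[s+1] (TKP j K a b m)).eval (x:ℂ)‖
          ≤ A * ((N/K)^(s+1) * (A + N/K)^m) :=
        mul_le_mul (hLp x hx) (ih (s+1) x hx) (norm_nonneg _) hA0
      have h3 : ‖(((s:ℂ)+1) * (2 * (Real.pi : ℂ) * I * (2*b)))‖
            * ‖(derivative^[s] (TKP j K a b m)).eval (x:ℂ)‖
          ≤ (((s:ℝ)+1) * (A/K)) * ((N/K)^s * (A + N/K)^m) := by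
        apply mul_le_mul _ (ih s x hx) (norm_nonneg _) (by positivity)
        rw [norm_mul]
        have hs1 : ‖((s:ℂ)+1)‖ = (s:ℝ)+1 := by
          rw [show ((s:ℂ)+1) = (((s:ℝ)+1 : ℝ) : ℂ) by push_cast; ring,
            Complex.norm_real, Real.norm_eq_abs, _root_.abs_of_nonneg (by positivity)]
        rw [hs1]
        exact mul_le_mul_of_nonneg_left hc0 (by positivity)
      refine le_trans (add_le_add h1 (add_le_add h2 h3)) ?_
      rcases Nat.eq_zero_or_pos (m+j) with hmj | hmj
      · -- N = 0 case: m = 0 and j = 0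
        have hm0 : m = 0 := by omega
        have hj0 : j = 0 := by omega
        subst hm0; subst hj0
        have hNz : N = 0 := by rw [hN_def]; norm_num
        rw [hNz]
        simp only [pow_zero, mul_one, zero_div, zero_add]
        match s with
        | 0 =>
          have h : (0:ℝ)^(0+2) + (A * (0:ℝ)^(0+1) + (((0:ℕ):ℝ)+1) * (A/(K:ℝ)) * (0:ℝ)^0)
              = A/(K:ℝ) := by norm_num
          rw [h]
          have h2 : ((1:ℝ)/(K:ℝ))^(0+1) * (A+1/(K:ℝ))^1 = A/(K:ℝ) + (1/(K:ℝ))^2 := by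
            ring
          rw [h2]
          linarith [sq_nonneg (1/(K:ℝ))]
        | (t+1) =>
          rw [zero_pow (by omega : t+1+2 ≠ 0), zero_pow (by omega : t+1+1 ≠ 0),
            zero_pow (by omega : t+1 ≠ 0)]
          norm_num
          positivity
      · have hN1 : 1 ≤ N := by
          rw [hN_def]
          have : (1:ℝ) ≤ ((m+j:ℕ):ℝ) := by exact_mod_cast hmj
          push_cast at this
          linarith
        have hkey := tk_arith A K N hA0 hKR hN1 m s
        calc (N/K)^(s+2) * (A + N/K)^m + (A * ((N/K)^(s+1) * (A + N/K)^m)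
              + ((s:ℝ)+1) * (A/K) * ((N/K)^s * (A + N/K)^m))
            = (N/K)^(s+2) * (A+N/K)^m + A*(N/K)^(s+1)*(A+N/K)^m
              + ((s:ℝ)+1)*(A/K)*(N/K)^s*(A+N/K)^m := by ring
          _ ≤ ((N+1)/K)^(s+1) * (A+(N+1)/K)^(m+1) := hkey

end Aux

/-- Derivative bounds for `f(x) = (x^j/K^j) exp(2πi a x + 2πi b x²)`:
for every `x ∈ [0,K]`, `|f^{(m)}(x)| ≤ (2π(|a|+|2bK|) + (m+j)/K)^m`. -/
theorem iteratedDeriv_theta_kernel_bound (j m K : ℕ) (hK : 0 < K) (a b : ℝ) :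
    ∀ x ∈ Set.Icc (0 : ℝ) (K : ℝ),
      ‖iteratedDeriv m
          (fun x : ℝ => (x : ℂ) ^ j / (K : ℂ) ^ j *
            Complex.exp (2 * (Real.pi : ℂ) * Complex.I * (a : ℂ) * (x : ℂ) +
              2 * (Real.pi : ℂ) * Complex.I * (b : ℂ) * (x : ℂ) ^ 2)) x‖ ≤
        (2 * Real.pi * (|a| + |2 * b * (K : ℝ)|) + ((m : ℝ) + (j : ℝ)) / (K : ℝ)) ^ m := by
  intro x hx
  rw [tk_rep j K a b m]
  rw [norm_mul, tk_exp_norm, mul_one]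
  have h := tk_bound j K hK a b m 0 x hx
  simpa using h
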